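/- Let v be a time-dependent vector field on ℝ^d, Lipschitz in space and uniformly bounded, with flow φ^t. Then for any positive finite Borel measure μ with finite p-th moment, W_p^{a,b}(μ, φ^t#μ) ≤ b·t·‖v‖_{C^0}·|μ|. -/
import Mathlib


open MeasureTheory Set
open scoped ENNReal NNReal

noncomputable section

abbrev Rd (d : ℕ) := EuclideanSpace ℝ (Fin d)

/-- Transference plans: probability measures on the product with normalized marginals. -/
def IsPlan {d : ℕ} (μ ν : Measure (Rd d)) (π : Measure (Rd d × Rd d)) : Prop :=
  IsProbabilityMeasure π ∧ π.map Prod.fst = (μ Set.univ)⁻¹ • μ ∧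
    π.map Prod.snd = (ν Set.univ)⁻¹ • ν

/-- Cost of a plan. -/
def planCost {d : ℕ} (p : ℝ) (π : Measure (Rd d × Rd d)) : ℝ≥0∞ :=
  ∫⁻ q, (edist q.1 q.2) ^ p ∂π

/-- Mass-scaled Wasserstein distance `W_p(μ,ν) = |μ| (inf_π ∫ |x-y|^p dπ)^{1/p}`. -/
def Wp {d : ℕ} (p : ℝ) (μ ν : Measure (Rd d)) : ℝ≥0∞ :=
  μ Set.univ * (⨅ π : {π : Measure (Rd d × Rd d) // IsPlan μ ν π}, planCost p π.1) ^ (1/p)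

/-- Total variation norm `|μ - ν|` of the difference of two measures. -/
def tv {d : ℕ} (μ ν : Measure (Rd d)) : ℝ≥0∞ := (μ - ν) Set.univ + (ν - μ) Set.univ

/-- Finite mass and finite `p`-th moment. -/
def finMom {d : ℕ} (p : ℝ) (μ : Measure (Rd d)) : Prop :=
  IsFiniteMeasure μ ∧ ∫⁻ x, (‖x‖₊ : ℝ≥0∞) ^ p ∂μ ≠ ⊤

/-- The functional `T_p^{a,b}`. -/
def Tab {d : ℕ} (a b p : ℝ) (μ ν : Measure (Rd d)) : ℝ≥0∞ :=
  ⨅ (μ' : Measure (Rd d)) (ν' : Measure (Rd d)) (_ : IsFiniteMeasure μ')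
    (_ : IsFiniteMeasure ν') (_ : μ' Set.univ = ν' Set.univ),
    ENNReal.ofReal a ^ p * (tv μ μ' + tv ν ν') ^ p + ENNReal.ofReal b ^ p * Wp p μ' ν' ^ p

/-- The generalized Wasserstein distance `W_p^{a,b}`. -/
def Wab {d : ℕ} (a b p : ℝ) (μ ν : Measure (Rd d)) : ℝ≥0∞ := Tab a b p μ ν ^ (1/p)

/-- `φ` is the flow of the time-dependent vector field `v`. -/
def IsFlowOf {d : ℕ} (v : ℝ → Rd d → Rd d) (φ : ℝ → Rd d → Rd d) : Prop :=
  (∀ x, φ 0 x = x) ∧ (∀ x t, HasDerivAt (fun s => φ s x) (v t (φ t x)) t) ∧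
    ∀ t, Measurable (φ t)

/-- `W_p^{a,b}(μ, φ^t#μ) ≤ b t ‖v‖_{C⁰} |μ|`. -/
theorem Wab_self_flow_le {d : ℕ} (a b p : ℝ) (ha : 0 < a) (hb : 0 < b) (hp : 1 ≤ p)
    (L : ℝ≥0) (M : ℝ) (v φ' : ℝ → Rd d → Rd d)
    (hv : ∀ t, LipschitzWith L (v t)) (hM : ∀ s x, ‖v s x‖ ≤ M)
    (hφ : IsFlowOf v φ')
    (μ : Measure (Rd d)) (hμ : finMom p μ) (t : ℝ) (ht : 0 ≤ t) :
    Wab a b p μ (μ.map (φ' t)) ≤ ENNReal.ofReal (b * t * M) * μ Set.univ := by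

  obtain ⟨hμfin, -⟩ := hμ
  obtain ⟨hφ0, hφd, hφm⟩ := hφ
  have hM0 : 0 ≤ M := le_trans (norm_nonneg _) (hM 0 0)
  have hp0 : (0:ℝ) < p := lt_of_lt_of_le one_pos hp
  have hdist : ∀ x, ‖φ' t x - x‖ ≤ M * t := by
    intro x
    have h := Convex.norm_image_sub_le_of_norm_hasDerivWithin_le
      (f := fun s => φ' s x) (f' := fun s => v s (φ' s x)) (C := M) (s := Set.univ)
      (fun s _ => (hφd x s).hasDerivWithinAt) (fun s _ => hM s _) convex_univ
      (Set.mem_univ 0) (Set.mem_univ t)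
    simpa [hφ0 x, Real.norm_of_nonneg ht] using h
  have hedist : ∀ x : Rd d, edist x (φ' t x) ≤ ENNReal.ofReal (M * t) := by
    intro x
    rw [edist_dist]
    exact ENNReal.ofReal_le_ofReal (by simpa [dist_eq_norm, norm_sub_rev] using hdist x)
  set ν := μ.map (φ' t) with hν
  haveI : IsFiniteMeasure ν := by
    constructor
    rw [hν, Measure.map_apply (hφm t) MeasurableSet.univ]
    simp [measure_lt_top]
  have hνuniv : ν Set.univ = μ Set.univ := by
    rw [hν, Measure.map_apply (hφm t) MeasurableSet.univ]; simp
  -- Wp bound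
  have hWp : Wp p μ ν ≤ μ Set.univ * ENNReal.ofReal (M * t) := by
    by_cases h0 : μ Set.univ = 0
    · simp [Wp, h0]
    · have hμtop : μ Set.univ ≠ ⊤ := measure_ne_top μ _
      have hf : Measurable (fun x : Rd d => (x, φ' t x)) :=
        measurable_id.prodMk (hφm t)
      set σ : Measure (Rd d) := (μ Set.univ)⁻¹ • μ with hσ
      have hσuniv : σ Set.univ = 1 := by
        rw [hσ]; simp [ENNReal.inv_mul_cancel h0 hμtop]
      set π : Measure (Rd d × Rd d) := σ.map (fun x => (x, φ' t x)) with hπ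
      have hplan : IsPlan μ ν π := by
        refine ⟨⟨?_⟩, ?_, ?_⟩
        · rw [hπ, Measure.map_apply hf MeasurableSet.univ]
          simpa using hσuniv
        · rw [hπ, Measure.map_map measurable_fst hf]
          have : (Prod.fst ∘ fun x : Rd d => (x, φ' t x)) = id := rfl
          rw [this, Measure.map_id]
        · rw [hπ, Measure.map_map measurable_snd hf, hνuniv, hσ,
            Measure.map_smul]
          rfl
      have hcost : planCost p π ≤ ENNReal.ofReal (M * t) ^ p := by
        rw [hπ, planCost, lintegral_map (by
          exact (measurable_edist.comp (measurable_fst.prodMk measurable_snd)).pow_const p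
          ) hf]
        calc ∫⁻ x, edist x (φ' t x) ^ p ∂σ
            ≤ ∫⁻ _, ENNReal.ofReal (M * t) ^ p ∂σ :=
              lintegral_mono fun x => ENNReal.rpow_le_rpow (hedist x) hp0.le
          _ = ENNReal.ofReal (M * t) ^ p := by rw [lintegral_const, hσuniv, mul_one]
      have hinf : (⨅ π : {π : Measure (Rd d × Rd d) // IsPlan μ ν π}, planCost p π.1)
          ≤ ENNReal.ofReal (M * t) ^ p :=
        le_trans (iInf_le _ ⟨π, hplan⟩) hcost
      calc Wp p μ ν ≤ μ Set.univ * (ENNReal.ofReal (M * t) ^ p) ^ (1/p) :=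
            mul_le_mul_right (ENNReal.rpow_le_rpow hinf (by positivity)) _
        _ = μ Set.univ * ENNReal.ofReal (M * t) := by
            rw [← ENNReal.rpow_mul, mul_one_div_cancel hp0.ne', ENNReal.rpow_one]
  -- Tab bound
  have htv : tv μ μ = 0 := by simp [tv, Measure.sub_self]
  have htv2 : tv ν ν = 0 := by simp [tv, Measure.sub_self]
  have hTab : Tab a b p μ ν ≤ ENNReal.ofReal b ^ p * Wp p μ ν ^ p := by
    refine le_trans (iInf_le_of_le μ (iInf_le_of_le ν (iInf_le_of_le hμfin
      (iInf_le_of_le ‹IsFiniteMeasure ν› (iInf_le_of_le hνuniv.symm le_rfl))))) ?_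
    rw [htv, htv2, add_zero, ENNReal.zero_rpow_of_pos hp0, mul_zero, zero_add]
  -- conclude
  have hX : Wp p μ ν ^ p ≤ (μ Set.univ * ENNReal.ofReal (M * t)) ^ p :=
    ENNReal.rpow_le_rpow hWp hp0.le
  calc Wab a b p μ ν
      ≤ (ENNReal.ofReal b ^ p * (μ Set.univ * ENNReal.ofReal (M * t)) ^ p) ^ (1/p) :=
        ENNReal.rpow_le_rpow (le_trans hTab (mul_le_mul_right hX _)) (by positivity)
    _ = ENNReal.ofReal b * (μ Set.univ * ENNReal.ofReal (M * t)) := by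
        rw [← ENNReal.mul_rpow_of_nonneg _ _ hp0.le, ← ENNReal.rpow_mul,
          mul_one_div_cancel hp0.ne', ENNReal.rpow_one]
    _ = ENNReal.ofReal (b * t * M) * μ Set.univ := by
        rw [← mul_assoc, mul_comm (ENNReal.ofReal b) (μ Set.univ), mul_assoc,
          ← ENNReal.ofReal_mul hb.le, mul_comm (μ Set.univ)]
        ring_nf
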